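/- Let μ be efficiency in the salience model with ε > 0, s ∈ (0,1], τ > 0, sτ < 1, sτε < 1 (revenue efficiency), z̄ > 0. Then the cross partial satisfies -μ_sτ = ∫v_i''(z_i)(∂z_i/∂s)(∂z_i/∂τ)di - ∫(1 - v_i'(z_i))(∂²z_i/∂s∂τ)di > 0: the marginal efficiency cost of taxation is strictly increasing in salience. -/

import Mathlib

set_option maxHeartbeats 1000000


/-- For efficiency `μ(τ,s) = ∫ ĉᵢ di` with `ε > 0`, `s ∈ (0,1]`, `τ > 0`,
`sτ < 1`, `sτε < 1` (revenue efficiency), the cross partial satisfies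
`-μ_sτ = ∫ vᵢ''(zᵢ)(∂zᵢ/∂s)(∂zᵢ/∂τ) di - ∫ (1-vᵢ'(zᵢ))(∂²zᵢ/∂s∂τ) di > 0`: the
marginal efficiency cost of taxation strictly increases in salience. Here
`zᵢ = wᵢ^(1+ε)(1-sτ)^ε`, `vᵢ'(zᵢ) = 1-sτ`, `vᵢ''(zᵢ) = (1-sτ)/(εzᵢ)`,
`∂zᵢ/∂s = -ετzᵢ/(1-sτ)`, `∂zᵢ/∂τ = -εszᵢ/(1-sτ)`,
`∂²zᵢ/∂s∂τ = -(ε(1-sτε)/(1-sτ)²)zᵢ`. -/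
theorem stmt14 (ε τ s : ℝ) (hε : 0 < ε) (hτ : 0 < τ) (hs0 : 0 < s) (hs1 : s ≤ 1)
    (hsτ : s * τ < 1) (hrev : s * τ * ε < 1)
    (wfun : ℝ → ℝ) (hw : ∀ i, 0 < wfun i) (hmono : Monotone wfun)
    (Wbar : ℝ) (hW : Wbar = ∫ j in (0:ℝ)..1, wfun j ^ (1 + ε)) (hWpos : 0 < Wbar)
    (chat : ℝ → ℝ → ℝ → ℝ)
    (hchat : ∀ i τ' s', chat i τ' s' =
      (1 - s' * τ') ^ ε *
        ((1 - τ' * (1 + ε * (1 - s'))) / (1 + ε) * wfun i ^ (1 + ε) + τ' * Wbar))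
    (μ : ℝ → ℝ → ℝ)
    (hμ : ∀ τ' s', μ τ' s' = ∫ i in (0:ℝ)..1, chat i τ' s')
    (z : ℝ → ℝ) (hzdef : ∀ i, z i = wfun i ^ (1 + ε) * (1 - s * τ) ^ ε)
    (D : ℝ)
    (hD : D = (∫ i in (0:ℝ)..1,
          ((1 - s * τ) / (ε * z i)) * (-(ε * τ * z i) / (1 - s * τ)) *
            (-(ε * s * z i) / (1 - s * τ)))
      - ∫ i in (0:ℝ)..1,
          (1 - (1 - s * τ)) * (-(ε * (1 - s * τ * ε) / (1 - s * τ) ^ 2) * z i)) :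
    HasDerivAt (fun s' => deriv (fun t => μ t s') τ) (-D) s ∧ 0 < D := by
  have ha : 0 < 1 - s * τ := by linarith
  have ha' : (1 : ℝ) - s * τ ≠ 0 := ne_of_gt ha
  have hε1 : (0:ℝ) < 1 + ε := by linarith
  have hε1' : (1:ℝ) + ε ≠ 0 := ne_of_gt hε1
  set a : ℝ := 1 - s * τ with hadef
  have haε : 0 < a ^ ε := Real.rpow_pos_of_pos ha ε
  -- integrability of wfun ^ (1+ε)
  have hmono' : Monotone (fun i => wfun i ^ (1 + ε)) := fun i j hij =>
    Real.rpow_le_rpow (hw i).le (hmono hij) (by linarith)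
  have hInt : IntervalIntegrable (fun i => wfun i ^ (1 + ε)) MeasureTheory.volume 0 1 :=
    hmono'.intervalIntegrable
  -- closed form for μ
  have hclosed : ∀ t s', μ t s' =
      (1 - s' * t) ^ ε * ((1 - t * (1 + ε * (1 - s'))) / (1 + ε) * Wbar + t * Wbar) := by
    intro t s'
    rw [hμ]
    simp only [hchat]
    rw [intervalIntegral.integral_const_mul]
    congr 1
    rw [intervalIntegral.integral_add (hInt.const_mul _) intervalIntegrable_const,
      intervalIntegral.integral_const_mul, intervalIntegral.integral_const, ← hW]
    simp
  -- inner derivative: for s' with 1 - s' * τ ≠ 0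
  have hG : ∀ s' : ℝ, (1 - s' * τ) ≠ 0 →
      deriv (fun t => μ t s') τ =
        ε * (1 - s' * τ) ^ (ε - 1) * (-s') *
          ((1 - τ * (1 + ε * (1 - s'))) / (1 + ε) * Wbar + τ * Wbar) +
        (1 - s' * τ) ^ ε * (-(1 + ε * (1 - s')) / (1 + ε) * Wbar + 1 * Wbar) := by
    intro s' h0
    have heq : (fun t => μ t s') =
        fun t => (1 - s' * t) ^ ε * ((1 - t * (1 + ε * (1 - s'))) / (1 + ε) * Wbar + t * Wbar) :=
      funext fun t => hclosed t s'
    rw [heq]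
    have hin : HasDerivAt (fun t : ℝ => 1 - s' * t) (-s') τ := by
      simpa using ((hasDerivAt_id τ).const_mul s').const_sub 1
    have hQ : HasDerivAt (fun t : ℝ => (1 - s' * t) ^ ε)
        (ε * (1 - s' * τ) ^ (ε - 1) * (-s')) τ := by
      have := (Real.hasDerivAt_rpow_const (x := 1 - s' * τ) (p := ε) (Or.inl h0)).comp τ hin
      simpa [mul_assoc, Function.comp_def] using this
    have hP : HasDerivAt
        (fun t : ℝ => (1 - t * (1 + ε * (1 - s'))) / (1 + ε) * Wbar + t * Wbar)
        (-(1 + ε * (1 - s')) / (1 + ε) * Wbar + 1 * Wbar) τ := by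
      have h1 : HasDerivAt (fun t : ℝ => 1 - t * (1 + ε * (1 - s'))) (-(1 + ε * (1 - s'))) τ := by
        simpa using ((hasDerivAt_id τ).mul_const (1 + ε * (1 - s'))).const_sub 1
      exact ((h1.div_const (1 + ε)).mul_const Wbar).add ((hasDerivAt_id τ).mul_const Wbar)
    exact (hQ.mul hP).deriv
  -- the derivative-in-s of G at s
  have hQ1 : HasDerivAt (fun s' : ℝ => 1 - s' * τ) (-τ) s := by
    simpa using ((hasDerivAt_id s).mul_const τ).const_sub 1
  have hF1 : HasDerivAt (fun s' : ℝ => (1 - s' * τ) ^ (ε - 1))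
      ((ε - 1) * a ^ (ε - 1 - 1) * (-τ)) s := by
    have := (Real.hasDerivAt_rpow_const (x := 1 - s * τ) (p := ε - 1) (Or.inl ha')).comp s hQ1
    simpa [mul_assoc, Function.comp_def] using this
  have hF3 : HasDerivAt (fun s' : ℝ => (1 - s' * τ) ^ ε) (ε * a ^ (ε - 1) * (-τ)) s := by
    have := (Real.hasDerivAt_rpow_const (x := 1 - s * τ) (p := ε) (Or.inl ha')).comp s hQ1
    simpa [mul_assoc, Function.comp_def] using this
  have hF2 : HasDerivAt (fun s' : ℝ => -s') (-1 : ℝ) s := by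
    simpa [Pi.neg_def] using (hasDerivAt_id' s).neg
  have hP4 : HasDerivAt
      (fun s' : ℝ => (1 - τ * (1 + ε * (1 - s'))) / (1 + ε) * Wbar + τ * Wbar)
      (τ * ε / (1 + ε) * Wbar) s := by
    have h1 : HasDerivAt (fun s' : ℝ => 1 - τ * (1 + ε * (1 - s'))) (τ * ε) s := by
      have h2 : HasDerivAt (fun s' : ℝ => 1 + ε * (1 - s')) (-ε) s := by
        simpa using (((hasDerivAt_id s).const_sub 1).const_mul ε).const_add 1
      simpa using (h2.const_mul τ).const_sub 1
    simpa using ((h1.div_const (1 + ε)).mul_const Wbar).add_const (τ * Wbar)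
  have hP5 : HasDerivAt
      (fun s' : ℝ => -(1 + ε * (1 - s')) / (1 + ε) * Wbar + 1 * Wbar)
      (ε / (1 + ε) * Wbar) s := by
    have h2 : HasDerivAt (fun s' : ℝ => -(1 + ε * (1 - s'))) ε s := by
      simpa [Pi.neg_def] using ((((hasDerivAt_id' s).const_sub 1).const_mul ε).const_add 1).neg
    simpa using ((h2.div_const (1 + ε)).mul_const Wbar).add_const (1 * Wbar)
  have hGfun : HasDerivAt
      (fun s' : ℝ =>
        ε * (1 - s' * τ) ^ (ε - 1) * (-s') *
          ((1 - τ * (1 + ε * (1 - s'))) / (1 + ε) * Wbar + τ * Wbar) +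
        (1 - s' * τ) ^ ε * (-(1 + ε * (1 - s')) / (1 + ε) * Wbar + 1 * Wbar))
      ((((ε * ((ε - 1) * a ^ (ε - 1 - 1) * (-τ))) * (-s) + (ε * a ^ (ε - 1)) * (-1)) *
          ((1 - τ * (1 + ε * (1 - s))) / (1 + ε) * Wbar + τ * Wbar) +
        (ε * a ^ (ε - 1) * (-s)) * (τ * ε / (1 + ε) * Wbar)) +
       ((ε * a ^ (ε - 1) * (-τ)) * (-(1 + ε * (1 - s)) / (1 + ε) * Wbar + 1 * Wbar) +
        a ^ ε * (ε / (1 + ε) * Wbar))) s := by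
    exact (((hF1.const_mul ε).mul hF2).mul hP4).add (hF3.mul hP5)
  -- compute D
  have hzpos : ∀ i, 0 < z i := fun i => by
    rw [hzdef]; exact mul_pos (Real.rpow_pos_of_pos (hw i) _) haε
  have hDval : D = ε * τ * s * a ^ ε / a * Wbar
      + s * τ * ε * (1 - s * τ * ε) * a ^ ε / a ^ 2 * Wbar := by
    rw [hD]
    have e1 : (fun i => ((1 - s * τ) / (ε * z i)) * (-(ε * τ * z i) / (1 - s * τ)) *
          (-(ε * s * z i) / (1 - s * τ)))
        = fun i => (ε * τ * s * a ^ ε / a) * wfun i ^ (1 + ε) := by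
      funext i
      have hu : wfun i ^ (1 + ε) ≠ 0 := (Real.rpow_pos_of_pos (hw i) _).ne'
      rw [hzdef, hadef]
      field_simp [ha', hε.ne', haε.ne', hu]
    have e2 : (fun i => (1 - (1 - s * τ)) * (-(ε * (1 - s * τ * ε) / (1 - s * τ) ^ 2) * z i))
        = fun i => (-(s * τ * ε * (1 - s * τ * ε) * a ^ ε / a ^ 2)) * wfun i ^ (1 + ε) := by
      funext i
      rw [hzdef, hadef]
      field_simp [ha']
      ring
    rw [e1, e2, intervalIntegral.integral_const_mul, intervalIntegral.integral_const_mul, ← hW]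
    ring
  have hrev' : 0 < 1 - s * τ * ε := by linarith
  have hDpos : 0 < D := by
    rw [hDval]
    have h1 : 0 < ε * τ * s * a ^ ε / a * Wbar := by positivity
    have h2 : 0 < s * τ * ε * (1 - s * τ * ε) * a ^ ε / a ^ 2 * Wbar := by positivity
    linarith
  refine ⟨?_, hDpos⟩
  -- eventual equality near s
  have hcont : Continuous fun s' : ℝ => 1 - s' * τ :=
    continuous_const.sub (continuous_id.mul continuous_const)
  have hev0 : ∀ᶠ s' in nhds s, 0 < 1 - s' * τ :=
    (hcont.tendsto s).eventually (eventually_gt_nhds ha)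
  have hev : (fun s' => deriv (fun t => μ t s') τ) =ᶠ[nhds s]
      (fun s' : ℝ =>
        ε * (1 - s' * τ) ^ (ε - 1) * (-s') *
          ((1 - τ * (1 + ε * (1 - s'))) / (1 + ε) * Wbar + τ * Wbar) +
        (1 - s' * τ) ^ ε * (-(1 + ε * (1 - s')) / (1 + ε) * Wbar + 1 * Wbar)) :=
    hev0.mono fun s' h => hG s' (ne_of_gt h)
  have hfinal := hGfun.congr_of_eventuallyEq hev
  convert hfinal using 1
  · rfl
  · rfl
  -- algebra: -D equals the computed derivative value
  have e1 : a ^ (ε - 1) = a ^ ε / a := by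
    rw [Real.rpow_sub ha, Real.rpow_one]
  have e2 : a ^ (ε - 1 - 1) = a ^ ε / a ^ 2 := by
    rw [show ε - 1 - 1 = ε - (2:ℝ) by ring, Real.rpow_sub ha]
    congr 1
    rw [show (2:ℝ) = ((2:ℕ):ℝ) by norm_num, Real.rpow_natCast]
  rw [hDval, e1, e2]
  field_simp
  ring
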